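/- arXiv:2403.08906 — 2 statements merged into one kernel-verified Lean document; each statement's English description precedes it below -/
import Mathlib

section
/- The softmax function with temperature τ > 0, mapping q ∈ ℝ^n to σ(q) with σ(q)(i) = exp(q(i)/τ) / Σ_j exp(q(j)/τ), is (1/τ)-Lipschitz with respect to the Euclidean norm: ‖σ(q) - σ(q̄)‖₂ ≤ (1/τ)‖q - q̄‖₂ for all q, q̄ ∈ ℝ^n. -/
/-- Softmax with temperature τ on ℝ^n. -/
noncomputable def softmax {n : ℕ} (τ : ℝ) (q : Fin n → ℝ) (i : Fin n) : ℝ :=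
  Real.exp (q i / τ) / ∑ j, Real.exp (q j / τ)

/-- Key algebraic bound for the softmax Jacobian applied to a vector. -/
lemma softmax_jac_bound {n : ℕ} (p v : Fin n → ℝ) (hp : ∀ i, 0 ≤ p i)
    (hs : ∑ i, p i = 1) :
    ∑ i, (p i * (v i - ∑ j, p j * v j)) ^ 2 ≤ ∑ i, (v i) ^ 2 := by
  set m := ∑ j, p j * v j with hm
  have hp1 : ∀ i, p i ≤ 1 := by
    intro i
    calc p i ≤ ∑ j, p j := Finset.single_le_sum (fun j _ => hp j) (Finset.mem_univ i)
    _ = 1 := hs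
  have h1 : ∑ i, (p i * (v i - m)) ^ 2 ≤ ∑ i, p i * (v i - m) ^ 2 := by
    apply Finset.sum_le_sum; intro i _
    rw [mul_pow]
    have hpp : p i ^ 2 ≤ p i := by nlinarith [hp i, hp1 i]
    exact mul_le_mul_of_nonneg_right hpp (sq_nonneg _)
  have h2 : ∑ i, p i * (v i - m) ^ 2 = (∑ i, p i * (v i) ^ 2) - m ^ 2 := by
    have e : ∀ i, p i * (v i - m) ^ 2
        = p i * (v i) ^ 2 - 2 * m * (p i * v i) + m ^ 2 * p i := by intro i; ring
    simp_rw [e]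
    rw [Finset.sum_add_distrib, Finset.sum_sub_distrib, ← Finset.mul_sum, ← Finset.mul_sum,
      hs, ← hm]
    ring
  have h3 : ∑ i, p i * (v i) ^ 2 ≤ ∑ i, (v i) ^ 2 := by
    apply Finset.sum_le_sum; intro i _
    nlinarith [hp i, hp1 i, sq_nonneg (v i)]
  nlinarith [sq_nonneg m]

/-- The softmax function with temperature τ > 0 is (1/τ)-Lipschitz in the
Euclidean norm: ‖σ(q) - σ(q̄)‖₂ ≤ (1/τ)‖q - q̄‖₂. -/
theorem softmax_lipschitz_euclidean {n : ℕ} (hn : 1 ≤ n) {τ : ℝ} (hτ : 0 < τ)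
    (q qb : Fin n → ℝ) :
    Real.sqrt (∑ i, (softmax τ q i - softmax τ qb i) ^ 2)
      ≤ (1 / τ) * Real.sqrt (∑ i, (q i - qb i) ^ 2) := by
  haveI : NeZero n := ⟨by omega⟩
  have hτ0 : τ ≠ 0 := ne_of_gt hτ
  set v : Fin n → ℝ := fun i => q i - qb i with hv
  set N : Fin n → ℝ → ℝ := fun i t => Real.exp ((qb i + t * v i) / τ) with hN
  set S : ℝ → ℝ := fun t => ∑ j, N j t with hSdef
  have hSpos : ∀ t, 0 < S t := fun t =>
    Finset.sum_pos (fun j _ => Real.exp_pos _) Finset.univ_nonempty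
  set p : ℝ → Fin n → ℝ := fun t i => N i t / S t with hpdef
  have hp_nonneg : ∀ t i, 0 ≤ p t i := fun t i =>
    div_nonneg (Real.exp_pos _).le (hSpos t).le
  have hp_sum : ∀ t, ∑ i, p t i = 1 := by
    intro t
    simp only [hpdef, ← Finset.sum_div]
    exact div_self (ne_of_gt (hSpos t))
  -- the derivative components
  set D0 : ℝ → Fin n → ℝ :=
    fun t i => (1 / τ) * (p t i * (v i - ∑ j, p t j * v j)) with hD0
  set e := (EuclideanSpace.equiv (Fin n) ℝ : EuclideanSpace ℝ (Fin n) ≃L[ℝ] (Fin n → ℝ))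
  set γ : ℝ → EuclideanSpace ℝ (Fin n) := fun t => e.symm (p t) with hγ
  set D : ℝ → EuclideanSpace ℝ (Fin n) := fun t => e.symm (D0 t) with hD
  have happ : ∀ (x : Fin n → ℝ) (i : Fin n), e.symm x i = x i := fun _ _ => rfl
  -- derivative of N
  have hNderiv : ∀ i t, HasDerivAt (N i) (N i t * (v i / τ)) t := by
    intro i t
    have h1 : HasDerivAt (fun t : ℝ => (qb i + t * v i) / τ) (v i / τ) t := by
      have := (((hasDerivAt_id t).mul_const (v i)).const_add (qb i)).div_const τ
      simpa using this
    simpa using h1.exp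
  have hSderiv : ∀ t, HasDerivAt S (∑ j, N j t * (v j / τ)) t := by
    intro t
    exact HasDerivAt.fun_sum (fun j _ => hNderiv j t)
  have hpDeriv : ∀ i t, HasDerivAt (fun t => p t i) (D0 t i) t := by
    intro i t
    have := (hNderiv i t).div (hSderiv t) (ne_of_gt (hSpos t))
    convert this using 1
    · rfl
    · rfl
    · rfl
    have hmsum : ∑ j, p t j * v j = (∑ j, N j t * v j) / S t := by
      simp only [hpdef]
      rw [Finset.sum_div]
      exact Finset.sum_congr rfl (fun j _ => div_mul_eq_mul_div _ _ _)
    have hsum : ∑ j, N j t * (v j / τ) = (∑ j, N j t * v j) / τ := by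
      rw [Finset.sum_div]
      exact Finset.sum_congr rfl (fun j _ => (mul_div_assoc _ _ _).symm)
    rw [hsum]
    simp only [hD0, hpdef, hmsum]
    have hS : S t ≠ 0 := ne_of_gt (hSpos t)
    field_simp
    rw [← Finset.sum_div]
    field_simp
  have hγderiv : ∀ t, HasDerivAt γ (D t) t := by
    intro t
    have h0 : HasDerivAt (fun t => p t) (D0 t) t := hasDerivAt_pi.2 (fun i => hpDeriv i t)
    exact ((e.symm : (Fin n → ℝ) →L[ℝ] EuclideanSpace ℝ (Fin n)).hasFDerivAt).comp_hasDerivAt t h0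
  -- continuity of D
  have hScont : Continuous S := by
    apply continuous_finset_sum
    intro j _
    fun_prop
  have hD0cont : Continuous D0 := by
    apply continuous_pi
    intro i
    have hpc : ∀ j, Continuous (fun t => p t j) := fun j =>
      (by fun_prop : Continuous (N j)).div hScont (fun t => ne_of_gt (hSpos t))
    have : Continuous (fun t => ∑ j, p t j * v j) :=
      continuous_finset_sum _ (fun j _ => (hpc j).mul continuous_const)
    exact continuous_const.mul ((hpc i).mul (continuous_const.sub this))
  have hDcont : Continuous D := (e.symm.continuous).comp hD0cont
  -- FTC
  have hFTC : γ 1 - γ 0 = ∫ t in (0:ℝ)..1, D t := by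
    rw [intervalIntegral.integral_eq_sub_of_hasDerivAt
      (fun t _ => hγderiv t) (hDcont.intervalIntegrable 0 1)]
  -- pointwise norm bound
  set vE : EuclideanSpace ℝ (Fin n) := e.symm v with hvE
  have hDbound : ∀ t, ‖D t‖ ≤ (1 / τ) * ‖vE‖ := by
    intro t
    rw [EuclideanSpace.norm_eq, EuclideanSpace.norm_eq]
    have key := softmax_jac_bound (p t) v (hp_nonneg t) (hp_sum t)
    have h1 : ∀ i : Fin n, ‖(D t) i‖ ^ 2
        = (1 / τ) ^ 2 * (p t i * (v i - ∑ j, p t j * v j)) ^ 2 := by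
      intro i
      simp only [hD, happ, Real.norm_eq_abs, sq_abs, hD0]
      ring
    have h2 : ∀ i : Fin n, ‖vE i‖ ^ 2 = (v i) ^ 2 := by
      intro i; simp [hvE, happ, Real.norm_eq_abs, sq_abs]
    simp_rw [h1, h2, ← Finset.mul_sum]
    rw [Real.sqrt_mul (by positivity), Real.sqrt_sq (by positivity)]
    gcongr
  have hnorm : ‖γ 1 - γ 0‖ ≤ (1 / τ) * ‖vE‖ := by
    rw [hFTC]
    have := intervalIntegral.norm_integral_le_of_norm_le_const
      (C := (1 / τ) * ‖vE‖) (f := D) (a := (0:ℝ)) (b := 1)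
      (fun t _ => hDbound t)
    simpa using this
  -- translate back
  have hγ1 : ∀ i, (γ 1 - γ 0) i = softmax τ q i - softmax τ qb i := by
    intro i
    have e1 : (γ 1) i = softmax τ q i := by
      simp [hγ, happ, hpdef, hN, softmax, hSdef, hv]
    have e0 : (γ 0) i = softmax τ qb i := by
      simp [hγ, happ, hpdef, hN, softmax, hSdef, hv]
    simp [e1, e0]
  have hL : Real.sqrt (∑ i, (softmax τ q i - softmax τ qb i) ^ 2) = ‖γ 1 - γ 0‖ := by
    rw [EuclideanSpace.norm_eq]
    congr 1
    apply Finset.sum_congr rfl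
    intro i _
    rw [hγ1 i, Real.norm_eq_abs, sq_abs]
  have hR : Real.sqrt (∑ i, (q i - qb i) ^ 2) = ‖vE‖ := by
    rw [EuclideanSpace.norm_eq]
    congr 1
    apply Finset.sum_congr rfl
    intro i _
    simp [hvE, happ, Real.norm_eq_abs, sq_abs, hv]
  rw [hL, hR]
  exact hnorm
end

section
/- The quantized minimax value error bound: under the assumptions that (i) v_κ is L_κ-Lipschitz w.r.t. ‖·‖₁ with L_κ = L₀Σ_{ℓ=0}^κ(ℓ+1)γ^ℓ, (ii) the minimax operator is non-expansive, (iii) the quantizer Φ satisfies ‖z - Φ(z)‖₁ ≤ Δ, and (iv) the one-step error recursion ‖v_κ - v̂_κ‖_∞ ≤ L_κΔ + γ‖v_{κ-1} - v̂_{κ-1}‖_∞ with ‖v₀ - v̂₀‖_∞ ≤ L₀Δ holds, we have ‖v_κ - v̂_κ‖_∞ ≤ Δ·(√|B|/τ)·max|u|/(1-γ)³ for all κ, where L₀ = (√|B|/τ)·max|u|. -/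
lemma sum_mul_geom_le {γ : ℝ} (hγ0 : 0 < γ) (hγ1 : γ < 1) (n : ℕ) :
    ∑ ℓ ∈ Finset.range n, (ℓ + 1 : ℝ) * γ ^ ℓ ≤ 1 / (1 - γ) ^ 2 := by
  have hn : ‖γ‖ < 1 := by rw [Real.norm_eq_abs, abs_lt]; constructor <;> linarith
  have hs1 : Summable (fun ℓ : ℕ => (ℓ : ℝ) * γ ^ ℓ) := by
    have := summable_pow_mul_geometric_of_norm_lt_one (R := ℝ) 1 hn
    simpa using this
  have hs2 : Summable (fun ℓ : ℕ => γ ^ ℓ) := summable_geometric_of_norm_lt_one hn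
  have hs : Summable (fun ℓ : ℕ => (ℓ + 1 : ℝ) * γ ^ ℓ) := by
    have := hs1.add hs2
    convert this using 2 with ℓ
    ring
  have h1γ : (0:ℝ) < 1 - γ := by linarith
  calc ∑ ℓ ∈ Finset.range n, (ℓ + 1 : ℝ) * γ ^ ℓ
      ≤ ∑' ℓ : ℕ, (ℓ + 1 : ℝ) * γ ^ ℓ := by
        apply Summable.sum_le_tsum _ _ hs
        intro i _
        positivity
    _ = γ / (1 - γ) ^ 2 + (1 - γ)⁻¹ := by
        rw [show (fun ℓ : ℕ => (ℓ + 1 : ℝ) * γ ^ ℓ) = fun ℓ : ℕ => (ℓ : ℝ) * γ ^ ℓ + γ ^ ℓ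
          by funext ℓ; ring, Summable.tsum_add hs1 hs2,
          tsum_coe_mul_geometric_of_norm_lt_one hn, tsum_geometric_of_lt_one hγ0.le hγ1]
    _ = 1 / (1 - γ) ^ 2 := by field_simp; ring

/-- Quantized minimax value error bound: with L₀ = (√|B|/τ)·U,
L_κ = L₀∑_{ℓ=0}^{κ}(ℓ+1)γ^ℓ, and errors e_κ = ‖v_κ - v̂_κ‖_∞ satisfying
e₀ ≤ L₀Δ and e_κ ≤ L_κΔ + γe_{κ-1}, we get e_κ ≤ Δ√|B|·U/(τ(1-γ)³). -/
theorem quantized_value_error_bound {γ τ Δ U : ℝ} {cardB : ℕ}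
    (hγ0 : 0 < γ) (hγ1 : γ < 1) (hτ : 0 < τ) (hΔ : 0 < Δ) (hU : 0 ≤ U)
    (hB : 1 ≤ cardB) (e : ℕ → ℝ) (he : ∀ κ, 0 ≤ e κ)
    (L : ℕ → ℝ)
    (hL : ∀ κ, L κ = (Real.sqrt cardB / τ * U) *
        ∑ ℓ ∈ Finset.range (κ + 1), (ℓ + 1 : ℝ) * γ ^ ℓ)
    (h0 : e 0 ≤ (Real.sqrt cardB / τ * U) * Δ)
    (hrec : ∀ κ : ℕ, 1 ≤ κ → e κ ≤ L κ * Δ + γ * e (κ - 1)) :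
    ∀ κ : ℕ, e κ ≤ Δ * Real.sqrt cardB * U / (τ * (1 - γ) ^ 3) := by
  set L0 : ℝ := Real.sqrt cardB / τ * U with hL0
  have hL0nn : 0 ≤ L0 := by
    apply mul_nonneg (div_nonneg (Real.sqrt_nonneg _) hτ.le) hU
  have h1γ : (0:ℝ) < 1 - γ := by linarith
  have hkey : ∀ κ : ℕ, e κ ≤ L0 * Δ / (1 - γ) ^ 3 := by
    intro κ
    induction κ with
    | zero =>
      refine h0.trans ?_
      rw [le_div_iff₀ (by positivity)]
      have h31 : (1 - γ) ^ 3 ≤ 1 := pow_le_one₀ h1γ.le (by linarith)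
      nlinarith [mul_nonneg hL0nn hΔ.le]
    | succ n ih =>
      have hLn : L (n + 1) ≤ L0 / (1 - γ) ^ 2 := by
        rw [hL]
        calc L0 * ∑ ℓ ∈ Finset.range (n + 1 + 1), (ℓ + 1 : ℝ) * γ ^ ℓ
            ≤ L0 * (1 / (1 - γ) ^ 2) :=
              mul_le_mul_of_nonneg_left (sum_mul_geom_le hγ0 hγ1 _) hL0nn
          _ = L0 / (1 - γ) ^ 2 := by ring
      have hr := hrec (n + 1) (by omega)
      simp only [Nat.add_sub_cancel] at hr
      have : L (n + 1) * Δ + γ * e n ≤ (L0 / (1 - γ) ^ 2) * Δ + γ * (L0 * Δ / (1 - γ) ^ 3) := by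
        apply add_le_add (mul_le_mul_of_nonneg_right hLn hΔ.le)
          (mul_le_mul_of_nonneg_left ih hγ0.le)
      have heq : (L0 / (1 - γ) ^ 2) * Δ + γ * (L0 * Δ / (1 - γ) ^ 3) = L0 * Δ / (1 - γ) ^ 3 := by
        field_simp
        ring
      linarith
  intro κ
  have := hkey κ
  have heq : L0 * Δ / (1 - γ) ^ 3 = Δ * Real.sqrt cardB * U / (τ * (1 - γ) ^ 3) := by
    rw [hL0]
    field_simp
  linarith
end
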